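/- arXiv:2505.03719 — 2 statements merged into one kernel-verified Lean document; each statement's English description precedes it below -/
import Mathlib

section
/- Let f : ℝ^d → ℝ be μ-strongly convex (μ > 0) and L-smooth (L ≥ μ), and let A be a real p×d matrix with full row rank (rank A = p, so σmin(A) > 0). Define φ : ℝ^p → ℝ by φ(λ) = sup_{x∈ℝ^d} (−⟨λ, A x⟩ − f(x)). Then φ is (σmin(A)²/L)-strongly convex. -/
private lemma div_le_div_of_nonneg_right' {x y c : ℝ} (h : x ≤ y) (hc : 0 < c) :
    x / c ≤ y / c := by
  gcongr

open scoped RealInnerProductSpace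
open Matrix

/-- The smallest singular value of a `p × d` matrix `A`, defined as the infimum of
`‖Aᵀ λ‖` over unit vectors `λ ∈ ℝ^p`. -/
noncomputable def sigmaMin {p d : ℕ} (A : Matrix (Fin p) (Fin d) ℝ) : ℝ :=
  sInf ((fun lam : EuclideanSpace ℝ (Fin p) => ‖Matrix.toEuclideanLin Aᵀ lam‖) ''
    {lam | ‖lam‖ = 1})

lemma sigmaMin_nonneg {p d : ℕ} (A : Matrix (Fin p) (Fin d) ℝ) : 0 ≤ sigmaMin A := by
  apply Real.sInf_nonneg
  rintro r ⟨lam, -, rfl⟩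
  exact norm_nonneg _

lemma sigmaMin_mul_le {p d : ℕ} (A : Matrix (Fin p) (Fin d) ℝ)
    (lam : EuclideanSpace ℝ (Fin p)) :
    sigmaMin A * ‖lam‖ ≤ ‖Matrix.toEuclideanLin Aᵀ lam‖ := by
  rcases eq_or_ne lam 0 with rfl | hlam
  · simp
  · have hn : (0:ℝ) < ‖lam‖ := norm_pos_iff.mpr hlam
    have hbdd : BddBelow ((fun lam : EuclideanSpace ℝ (Fin p) =>
        ‖Matrix.toEuclideanLin Aᵀ lam‖) '' {lam | ‖lam‖ = 1}) := by
      refine ⟨0, ?_⟩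
      rintro r ⟨y, -, rfl⟩
      exact norm_nonneg _
    have hmem : ‖Matrix.toEuclideanLin Aᵀ (‖lam‖⁻¹ • lam)‖ ∈
        ((fun lam : EuclideanSpace ℝ (Fin p) =>
          ‖Matrix.toEuclideanLin Aᵀ lam‖) '' {lam | ‖lam‖ = 1}) := by
      refine ⟨‖lam‖⁻¹ • lam, ?_, rfl⟩
      simp [norm_smul, abs_of_nonneg (inv_nonneg.mpr hn.le), inv_mul_cancel₀ hn.ne']
    have h1 : sigmaMin A ≤ ‖Matrix.toEuclideanLin Aᵀ (‖lam‖⁻¹ • lam)‖ := csInf_le hbdd hmem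
    rw [_root_.map_smul, norm_smul, Real.norm_eq_abs, abs_of_nonneg (inv_nonneg.mpr hn.le)] at h1
    have h2 := mul_le_mul_of_nonneg_right h1 hn.le
    calc sigmaMin A * ‖lam‖ ≤ ‖lam‖⁻¹ * ‖Matrix.toEuclideanLin Aᵀ lam‖ * ‖lam‖ := h2
      _ = ‖Matrix.toEuclideanLin Aᵀ lam‖ := by field_simp

section aux
variable {E : Type*} [NormedAddCommGroup E] [InnerProductSpace ℝ E] [CompleteSpace E]

lemma aux_hasDerivAt_line {f : E → ℝ} (hfd : Differentiable ℝ f) (x u : E) (t : ℝ) :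
    HasDerivAt (fun s : ℝ => f (x + s • u)) ⟪gradient f (x + t • u), u⟫ t := by
  have hc : HasDerivAt (fun s : ℝ => x + s • u) u t := by
    simpa using ((hasDerivAt_id t).smul_const u).const_add x
  have hg := (hfd (x + t • u)).hasGradientAt.hasFDerivAt
  have h2 := hg.comp_hasDerivAt t hc
  simpa [InnerProductSpace.toDual_apply_apply, Function.comp_def] using h2

lemma aux_tangent {h : E → ℝ} (hc : ConvexOn ℝ Set.univ h) (hd : Differentiable ℝ h)
    (x y : E) : h x + ⟪gradient h x, y - x⟫ ≤ h y := by
  set u := y - x with hu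
  have hq := aux_hasDerivAt_line hd x u
  have hconv : ConvexOn ℝ Set.univ fun s : ℝ => h (x + s • u) := by
    have h2 := hc.comp_affineMap (AffineMap.lineMap x y : ℝ →ᵃ[ℝ] E)
    have h3 : ((fun s : ℝ => h (x + s • u))) = h ∘ (AffineMap.lineMap x y : ℝ →ᵃ[ℝ] E) := by
      funext s
      simp only [Function.comp, AffineMap.lineMap_apply_module, hu]
      congr 1
      module
    rw [h3]
    simpa using h2
  have hslope := hconv.le_slope_of_hasDerivAt (Set.mem_univ (0:ℝ)) (Set.mem_univ (1:ℝ))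
    one_pos (by simpa using hq 0)
  have h1 : slope (fun s : ℝ => h (x + s • u)) 0 1 = h y - h x := by
    simp [slope, hu]
  rw [h1] at hslope
  have h4 : ⟪gradient h x, u⟫ = (fderiv ℝ h x) u := by
    rw [gradient, InnerProductSpace.toDual_symm_apply]
  linarith

lemma aux_descent {f : E → ℝ} {L : ℝ} (hL : 0 ≤ L) (hfd : Differentiable ℝ f)
    (hfs : ∀ x y : E, ‖gradient f x - gradient f y‖ ≤ L * ‖x - y‖) (x u : E) :
    f (x + u) ≤ f x + ⟪gradient f x, u⟫ + L / 2 * ‖u‖ ^ 2 := by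
  have hgc : Continuous (gradient f) := by
    refine LipschitzWith.continuous (K := Real.toNNReal L) ?_
    refine LipschitzWith.of_dist_le_mul fun a b => ?_
    rw [dist_eq_norm, dist_eq_norm]
    calc ‖gradient f a - gradient f b‖ ≤ L * ‖a - b‖ := hfs a b
      _ = (Real.toNNReal L : ℝ) * ‖a - b‖ := by rw [Real.coe_toNNReal L hL]
  have hq := aux_hasDerivAt_line hfd x u
  have hcont : Continuous fun t : ℝ => ⟪gradient f (x + t • u), u⟫ := by
    exact (hgc.comp (by continuity)).inner continuous_const
  have hFTC : f (x + u) - f x = ∫ t in (0:ℝ)..1, ⟪gradient f (x + t • u), u⟫ := by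
    have h2 := intervalIntegral.integral_eq_sub_of_hasDerivAt
      (f := fun s : ℝ => f (x + s • u)) (f' := fun t : ℝ => ⟪gradient f (x + t • u), u⟫)
      (fun t _ => hq t) (hcont.intervalIntegrable 0 1)
    simpa using h2.symm
  have hbound : (∫ t in (0:ℝ)..1, ⟪gradient f (x + t • u), u⟫)
      ≤ ∫ t in (0:ℝ)..1, (⟪gradient f x, u⟫ + (L * ‖u‖ ^ 2) * t) := by
    refine intervalIntegral.integral_mono_on zero_le_one (hcont.intervalIntegrable 0 1)
      ((continuous_const.add (continuous_const.mul continuous_id)).intervalIntegrable 0 1) ?_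
    intro t ht
    have h1 : ⟪gradient f (x + t • u), u⟫ - ⟪gradient f x, u⟫
        = ⟪gradient f (x + t • u) - gradient f x, u⟫ := (inner_sub_left _ _ _).symm
    have h2 : ⟪gradient f (x + t • u) - gradient f x, u⟫
        ≤ ‖gradient f (x + t • u) - gradient f x‖ * ‖u‖ := real_inner_le_norm _ _
    have h3 : ‖gradient f (x + t • u) - gradient f x‖ ≤ L * (t * ‖u‖) := by
      have := hfs (x + t • u) x
      simpa [norm_smul, abs_of_nonneg ht.1] using this
    have h4 : L * (t * ‖u‖) * ‖u‖ = (L * ‖u‖ ^ 2) * t := by ring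
    nlinarith [norm_nonneg u]
  have hval : (∫ t in (0:ℝ)..1, (⟪gradient f x, u⟫ + (L * ‖u‖ ^ 2) * t))
      = ⟪gradient f x, u⟫ + L / 2 * ‖u‖ ^ 2 := by
    have hi : IntervalIntegrable (fun t : ℝ => L * ‖u‖ ^ 2 * t) MeasureTheory.volume 0 1 :=
      (continuous_const.mul continuous_id').intervalIntegrable 0 1
    rw [intervalIntegral.integral_add intervalIntegrable_const hi,
      intervalIntegral.integral_const_mul, integral_id]
    simp
    ring
  rw [hval] at hbound
  linarith

lemma aux_identity (u v : E) (a b : ℝ) (hab : a + b = 1) :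
    a * ‖u‖ ^ 2 + b * ‖v‖ ^ 2 = ‖a • u + b • v‖ ^ 2 + a * b * ‖u - v‖ ^ 2 := by
  have hb : b = 1 - a := by linarith
  subst hb
  simp only [← real_inner_self_eq_norm_sq, inner_add_add_self, inner_sub_sub_self,
    real_inner_smul_left, real_inner_smul_right]
  ring

lemma aux_bdd {μ : ℝ} (hμ : 0 < μ) {f : E → ℝ}
    (hf : ConvexOn ℝ Set.univ fun x => f x - μ / 2 * ‖x‖ ^ 2) (hd : Differentiable ℝ f)
    (w : E) : BddAbove (Set.range fun x => ⟪w, x⟫ - f x) := by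
  obtain ⟨h, hh⟩ : ∃ h : E → ℝ, h = fun x => f x - μ / 2 * ‖x‖ ^ 2 := ⟨_, rfl⟩
  rw [← hh] at hf
  have hdn : Differentiable ℝ fun x : E => ‖x‖ ^ 2 := by
    exact (contDiff_norm_sq ℝ (n := 1)).differentiable one_ne_zero
  have hdh : Differentiable ℝ h := by rw [hh]; exact hd.sub (hdn.const_mul _)
  set w0 := gradient h 0 with hw0
  clear_value w0
  refine ⟨‖w - w0‖ ^ 2 / (2 * μ) - h 0, ?_⟩
  rintro r ⟨x, rfl⟩
  have ht := aux_tangent hf hdh 0 x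
  have hfx : f x = h x + μ / 2 * ‖x‖ ^ 2 := by rw [hh]; ring
  have hcs : ⟪w - w0, x⟫ ≤ ‖w - w0‖ * ‖x‖ := real_inner_le_norm _ _
  have hsub : ⟪w, x⟫ - ⟪w0, x⟫ = ⟪w - w0, x⟫ := (inner_sub_left _ _ _).symm
  have ht' : h 0 + ⟪w0, x⟫ ≤ h x := by simpa [← hw0] using ht
  have hq : ‖w - w0‖ * ‖x‖ - μ / 2 * ‖x‖ ^ 2 ≤ ‖w - w0‖ ^ 2 / (2 * μ) := by
    rw [le_div_iff₀ (by positivity : (0:ℝ) < 2 * μ)]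
    nlinarith [sq_nonneg (‖w - w0‖ - μ * ‖x‖)]
  show ⟪w, x⟫ - f x ≤ ‖w - w0‖ ^ 2 / (2 * μ) - h 0
  nlinarith [ht', hfx, hcs, hsub, hq]
end aux

/-- If `f : ℝ^d → ℝ` is `μ`-strongly convex (`μ > 0`) and `L`-smooth (`L ≥ μ`), and
`A` is a `p × d` real matrix with full row rank (`rank A = p`), then
`φ(λ) = sup_x (−⟪λ, A x⟫ − f x)` is `(σmin(A)²/L)`-strongly convex. -/
theorem stmt1 {d p : ℕ} (μ L : ℝ) (hμ : 0 < μ) (hL : μ ≤ L)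
    (f : EuclideanSpace ℝ (Fin d) → ℝ)
    (hf : ConvexOn ℝ Set.univ (fun x => f x - μ / 2 * ‖x‖ ^ 2))
    (hfd : Differentiable ℝ f)
    (hfs : ∀ x y : EuclideanSpace ℝ (Fin d), ‖gradient f x - gradient f y‖ ≤ L * ‖x - y‖)
    (A : Matrix (Fin p) (Fin d) ℝ) (hA : A.rank = p)
    (φ : EuclideanSpace ℝ (Fin p) → ℝ)
    (hφ : ∀ lam, φ lam = ⨆ x : EuclideanSpace ℝ (Fin d),
      (-⟪lam, Matrix.toEuclideanLin A x⟫ - f x)) :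
    ConvexOn ℝ Set.univ (fun lam => φ lam - sigmaMin A ^ 2 / L / 2 * ‖lam‖ ^ 2) := by
  have hL0 : (0:ℝ) < L := lt_of_lt_of_le hμ hL
  have h2L : (0:ℝ) < 2 * L := by linarith
  rw [← strongConvexOn_iff_convex]
  have hadj : ∀ (lam : EuclideanSpace ℝ (Fin p)) (x : EuclideanSpace ℝ (Fin d)),
      -⟪lam, Matrix.toEuclideanLin A x⟫ - f x = ⟪-(Matrix.toEuclideanLin Aᵀ lam), x⟫ - f x := by
    intro lam x
    rw [inner_neg_left]
    have h1 : (Aᵀ) = Aᴴ := (Matrix.conjTranspose_eq_transpose_of_trivial A).symm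
    rw [h1, Matrix.toEuclideanLin_conjTranspose_eq_adjoint, LinearMap.adjoint_inner_left]
  have hw : ∀ lam, φ lam = ⨆ x, (⟪-(Matrix.toEuclideanLin Aᵀ lam), x⟫ - f x) := by
    intro lam; rw [hφ]; exact iSup_congr fun x => hadj lam x
  have hbdd : ∀ w : EuclideanSpace ℝ (Fin d),
      BddAbove (Set.range fun x => ⟪w, x⟫ - f x) := fun w => aux_bdd hμ hf hfd w
  refine ⟨convex_univ, ?_⟩
  intro y₁ _ y₂ _ a b ha hb hab
  rw [smul_eq_mul, smul_eq_mul, hw]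
  refine ciSup_le fun xt => ?_
  set g := gradient f xt with hg
  have hest : ∀ y : EuclideanSpace ℝ (Fin p),
      ⟪-(Matrix.toEuclideanLin Aᵀ y), xt⟫ - f xt
        + ‖-(Matrix.toEuclideanLin Aᵀ y) - g‖ ^ 2 / (2 * L) ≤ φ y := by
    intro y
    rw [hw y]
    set wv := -(Matrix.toEuclideanLin Aᵀ y) with hwv
    set u := L⁻¹ • (wv - g) with hu
    have hle : ⟪wv, xt + u⟫ - f (xt + u) ≤ ⨆ x, (⟪wv, x⟫ - f x) := le_ciSup (hbdd wv) _
    have hdes := aux_descent hL0.le hfd hfs xt u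
    have h1 : ⟪wv, xt + u⟫ = ⟪wv, xt⟫ + L⁻¹ * ⟪wv, wv - g⟫ := by
      rw [inner_add_right, hu, real_inner_smul_right]
    have h2 : ⟪g, u⟫ = L⁻¹ * ⟪g, wv - g⟫ := by rw [hu, real_inner_smul_right]
    have h3 : ‖u‖ ^ 2 = L⁻¹ ^ 2 * ‖wv - g‖ ^ 2 := by
      rw [hu, norm_smul, Real.norm_eq_abs, abs_of_nonneg (inv_nonneg.mpr hL0.le), mul_pow]
    have h4 : ⟪wv, wv - g⟫ - ⟪g, wv - g⟫ = ‖wv - g‖ ^ 2 := by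
      rw [← inner_sub_left, real_inner_self_eq_norm_sq]
    have h5 : L⁻¹ * ⟪wv, wv - g⟫ - L⁻¹ * ⟪g, wv - g⟫ - L / 2 * (L⁻¹ ^ 2 * ‖wv - g‖ ^ 2)
        = ‖wv - g‖ ^ 2 / (2 * L) := by
      rw [← mul_sub, h4]; field_simp; ring
    rw [h2, h3] at hdes
    have hkey : ⟪wv, xt⟫ - f xt + ‖wv - g‖ ^ 2 / (2 * L) ≤ ⟪wv, xt + u⟫ - f (xt + u) := by
      rw [h1]; linarith
    exact hkey.trans hle
  have e1 := hest y₁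
  have e2 := hest y₂
  set u1 := -(Matrix.toEuclideanLin Aᵀ y₁) with hu1
  set u2 := -(Matrix.toEuclideanLin Aᵀ y₂) with hu2
  have hws : -(Matrix.toEuclideanLin Aᵀ (a • y₁ + b • y₂)) = a • u1 + b • u2 := by
    rw [hu1, hu2, map_add, _root_.map_smul, _root_.map_smul]; module
  have hinner : ⟪-(Matrix.toEuclideanLin Aᵀ (a • y₁ + b • y₂)), xt⟫
      = a * ⟪u1, xt⟫ + b * ⟪u2, xt⟫ := by
    rw [hws, inner_add_left, real_inner_smul_left, real_inner_smul_left]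
  have hid' : a * b * ‖u1 - u2‖ ^ 2 ≤ a * ‖u1 - g‖ ^ 2 + b * ‖u2 - g‖ ^ 2 := by
    have h0 : (u1 - g) - (u2 - g) = u1 - u2 := by abel
    have hid := aux_identity (u1 - g) (u2 - g) a b hab
    rw [h0] at hid
    nlinarith [sq_nonneg ‖a • (u1 - g) + b • (u2 - g)‖]
  have hsig : sigmaMin A ^ 2 * ‖y₁ - y₂‖ ^ 2 ≤ ‖u1 - u2‖ ^ 2 := by
    have h0 : u1 - u2 = -(Matrix.toEuclideanLin Aᵀ (y₁ - y₂)) := by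
      rw [hu1, hu2, map_sub]; abel
    have h1 := sigmaMin_mul_le A (y₁ - y₂)
    have h3 : 0 ≤ sigmaMin A * ‖y₁ - y₂‖ := mul_nonneg (sigmaMin_nonneg A) (norm_nonneg _)
    rw [h0, norm_neg] at *
    nlinarith [h1, h3]
  have hab0 : 0 ≤ a * b := mul_nonneg ha hb
  have step2 : a * b * (sigmaMin A ^ 2 / L / 2 * ‖y₁ - y₂‖ ^ 2)
      ≤ a * b * ‖u1 - u2‖ ^ 2 / (2 * L) := by
    have h := mul_le_mul_of_nonneg_left hsig hab0
    have hx : sigmaMin A ^ 2 / L / 2 * ‖y₁ - y₂‖ ^ 2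
        = sigmaMin A ^ 2 * ‖y₁ - y₂‖ ^ 2 / (2 * L) := by
      rw [div_div, div_mul_eq_mul_div, mul_comm L 2]
    rw [hx, ← mul_div_assoc]
    exact div_le_div_of_nonneg_right' h h2L
  have step1 : a * b * ‖u1 - u2‖ ^ 2 / (2 * L)
      ≤ (a * ‖u1 - g‖ ^ 2 + b * ‖u2 - g‖ ^ 2) / (2 * L) := div_le_div_of_nonneg_right' hid' h2L
  have e1' := mul_le_mul_of_nonneg_left e1 ha
  have e2' := mul_le_mul_of_nonneg_left e2 hb
  have habf : a * f xt + b * f xt = f xt := by rw [← add_mul, hab, one_mul]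
  rw [hinner]
  have hq1 : a * (⟪u1, xt⟫ - f xt + ‖u1 - g‖ ^ 2 / (2 * L))
      = a * ⟪u1, xt⟫ - a * f xt + a * ‖u1 - g‖ ^ 2 / (2 * L) := by ring
  have hq2 : b * (⟪u2, xt⟫ - f xt + ‖u2 - g‖ ^ 2 / (2 * L))
      = b * ⟪u2, xt⟫ - b * f xt + b * ‖u2 - g‖ ^ 2 / (2 * L) := by ring
  have hq3 : a * ‖u1 - g‖ ^ 2 / (2 * L) + b * ‖u2 - g‖ ^ 2 / (2 * L)
      = (a * ‖u1 - g‖ ^ 2 + b * ‖u2 - g‖ ^ 2) / (2 * L) := by ring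
  rw [hq1] at e1'
  rw [hq2] at e2'
  linarith
end

section
/- Let G : ℝ^m → ℝ be convex and bounded below, let S be a real m×m symmetric positive semidefinite matrix, and let ρ > 0. Define F_ρ : ℝ^m → ℝ by F_ρ(y) = sup_{λ∈ℝ^m} (−⟨y, Sλ⟩ − G(λ) − (ρ/2)‖Sλ‖²). Then F_ρ is finite everywhere on ℝ^m, convex, differentiable, and its gradient is (1/ρ)-Lipschitz; i.e., F_ρ is (1/ρ)-smooth. -/
open scoped RealInnerProductSpace
open Matrix

set_option linter.unusedSectionVars false
set_option maxHeartbeats 1000000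

section Aux
variable {E : Type*} [NormedAddCommGroup E] [InnerProductSpace ℝ E] [CompleteSpace E]

private lemma norm_combo_sq (z₁ z₂ : E) (t : ℝ) :
    ‖t • z₁ + (1 - t) • z₂‖ ^ 2
      = t * ‖z₁‖ ^ 2 + (1 - t) * ‖z₂‖ ^ 2 - t * (1 - t) * ‖z₁ - z₂‖ ^ 2 := by
  have h : ∀ w : E, ‖w‖ ^ 2 = ⟪w, w⟫ := fun w => (real_inner_self_eq_norm_sq w).symm
  simp only [h]
  simp only [inner_add_left, inner_add_right, inner_sub_left, inner_sub_right,
    real_inner_smul_left, real_inner_smul_right, real_inner_comm z₂ z₁]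
  ring

private lemma sq_lower {X r e : ℝ} (hX : 0 ≤ X) (hr : 0 ≤ r) (h : r - e ≤ X) :
    r ^ 2 - 2 * r * e ≤ X ^ 2 := by
  rcases le_or_gt r e with h1 | h1
  · nlinarith
  · nlinarith [mul_nonneg (sub_nonneg.2 h) (by linarith : (0:ℝ) ≤ X + (r - e)), sq_nonneg e]

private theorem aux (ρ : ℝ) (hρ : 0 < ρ) (G : E → ℝ)
    (hG : ConvexOn ℝ (Set.univ : Set E) G) (hGb : BddBelow (Set.range G))
    (T : E →ₗ[ℝ] E) (F : E → ℝ)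
    (hF : ∀ y, F y = ⨆ lam : E, (-⟪y, T lam⟫ - G lam - ρ / 2 * ‖T lam‖ ^ 2)) :
    (∀ y : E, BddAbove (Set.range fun lam : E =>
        -⟪y, T lam⟫ - G lam - ρ / 2 * ‖T lam‖ ^ 2)) ∧
    ConvexOn ℝ Set.univ F ∧ Differentiable ℝ F ∧
    (∀ y y' : E, ‖gradient F y - gradient F y'‖ ≤ (1 / ρ) * ‖y - y'‖) := by
  haveI : Nonempty E := ⟨0⟩
  obtain ⟨c, hc⟩ := hGb
  have hc' : ∀ lam : E, c ≤ G lam := fun lam => hc ⟨lam, rfl⟩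
  set φ : E → E → ℝ := fun y lam => -⟪y, T lam⟫ - G lam - ρ / 2 * ‖T lam‖ ^ 2 with hφ
  -- boundedness above
  have hbdd : ∀ y : E, BddAbove (Set.range (φ y)) := by
    intro y
    refine ⟨‖y‖ ^ 2 / (2 * ρ) - c, ?_⟩
    rintro x ⟨lam, rfl⟩
    have h1 : -⟪y, T lam⟫ ≤ ‖y‖ * ‖T lam‖ := by
      have := abs_real_inner_le_norm y (T lam)
      cases abs_le.mp this; linarith
    have h2 := hc' lam
    have h3 : (0:ℝ) ≤ ‖T lam‖ := norm_nonneg _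
    have h4 : ‖y‖ * ‖T lam‖ - ρ / 2 * ‖T lam‖ ^ 2 ≤ ‖y‖ ^ 2 / (2 * ρ) := by
      rw [le_div_iff₀ (by positivity)]
      nlinarith [sq_nonneg (ρ * ‖T lam‖ - ‖y‖)]
    simp only [hφ]
    linarith
  have hle : ∀ (y lam : E), φ y lam ≤ F y := by
    intro y lam; rw [hF]; exact le_ciSup (hbdd y) lam
  -- strong concavity along combinations
  have hconc : ∀ (y l1 l2 : E) (t : ℝ), 0 ≤ t → t ≤ 1 →
      t * φ y l1 + (1 - t) * φ y l2 + ρ / 2 * (t * (1 - t)) * ‖T l1 - T l2‖ ^ 2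
        ≤ φ y (t • l1 + (1 - t) • l2) := by
    intro y l1 l2 t ht ht'
    have hT : T (t • l1 + (1 - t) • l2) = t • T l1 + (1 - t) • T l2 := by
      simp [map_add, _root_.map_smul]
    have hGc : G (t • l1 + (1 - t) • l2) ≤ t * G l1 + (1 - t) * G l2 :=
      hG.2 (Set.mem_univ l1) (Set.mem_univ l2) ht (by linarith) (by ring)
    have hi : ⟪y, T (t • l1 + (1 - t) • l2)⟫ = t * ⟪y, T l1⟫ + (1 - t) * ⟪y, T l2⟫ := by
      rw [hT]; simp [inner_add_right, real_inner_smul_right]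
    have hn : ‖T (t • l1 + (1 - t) • l2)‖ ^ 2
        = t * ‖T l1‖ ^ 2 + (1 - t) * ‖T l2‖ ^ 2 - t * (1 - t) * ‖T l1 - T l2‖ ^ 2 := by
      rw [hT, norm_combo_sq]
    simp only [hφ]
    rw [hi, hn]
    nlinarith [hGc]
  -- existence of the "maximizer" point p
  have hP : ∀ y : E, ∃ p : E, ∀ ε : ℝ, 0 < ε →
      ∃ lam : E, F y - ε ≤ φ y lam ∧ ‖T lam - p‖ ≤ ε := by
    intro y
    have hsup : ∀ n : ℕ, ∃ lam : E, F y - 1 / (n + 1) < φ y lam := by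
      intro n
      have hpos : (0:ℝ) < 1 / (n + 1 : ℝ) := by positivity
      have hlt : F y - 1 / (n + 1 : ℝ) < ⨆ lam : E, φ y lam := by
        rw [← hF y]; linarith
      exact exists_lt_of_lt_ciSup hlt
    choose seq hseq using hsup
    set z : ℕ → E := fun n => T (seq n) with hz
    have hdist : ∀ N n m : ℕ, N ≤ n → N ≤ m → ‖z n - z m‖ ^ 2 ≤ 8 / (ρ * (N + 1)) := by
      intro N n m hn hm
      have h1 := hseq n
      have h2 := hseq m
      have hcb := hconc y (seq n) (seq m) (1/2) (by norm_num) (by norm_num)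
      have hle' := hle y ((1/2 : ℝ) • seq n + (1 - 1/2 : ℝ) • seq m)
      have hn1 : (1:ℝ) / (n + 1) ≤ 1 / (N + 1) := by
        apply one_div_le_one_div_of_le (by positivity)
        have : (N:ℝ) ≤ n := by exact_mod_cast hn
        linarith
      have hm1 : (1:ℝ) / (m + 1) ≤ 1 / (N + 1) := by
        apply one_div_le_one_div_of_le (by positivity)
        have : (N:ℝ) ≤ m := by exact_mod_cast hm
        linarith
      have hq : ρ / 8 * ‖z n - z m‖ ^ 2 ≤ 1 / (N + 1) := by nlinarith
      have hNpos : (0:ℝ) < (N:ℝ) + 1 := by positivity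
      have hN1eq : ((N:ℝ) + 1) * (1 / ((N:ℝ) + 1)) = 1 := by field_simp
      rw [le_div_iff₀ (by positivity)]
      nlinarith [mul_le_mul_of_nonneg_left hq hNpos.le, hN1eq]
    have hcauchy : CauchySeq z := by
      rw [Metric.cauchySeq_iff]
      intro ε hε
      obtain ⟨N, hN⟩ := exists_nat_gt (8 / (ρ * ε ^ 2))
      refine ⟨N, fun n hn m hm => ?_⟩
      rw [dist_eq_norm]
      have hd := hdist N n m hn hm
      have hlt : 8 / (ρ * (N + 1)) < ε ^ 2 := by
        rw [div_lt_iff₀ (by positivity)]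
        rw [div_lt_iff₀ (by positivity)] at hN
        nlinarith [hε, hρ]
      exact lt_of_pow_lt_pow_left₀ 2 hε.le (lt_of_le_of_lt hd hlt)
    obtain ⟨p, hp⟩ := cauchySeq_tendsto_of_complete hcauchy
    refine ⟨p, fun ε hε => ?_⟩
    obtain ⟨N1, hN1⟩ := (Metric.tendsto_atTop.mp hp) ε hε
    obtain ⟨N2, hN2⟩ := exists_nat_gt (1 / ε)
    set M : ℕ := max N1 N2 with hM
    refine ⟨seq M, ?_, ?_⟩
    · have h1 := hseq M
      have h2 : (1:ℝ) / ((M:ℝ) + 1) ≤ ε := by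
        rw [div_le_iff₀ (by positivity)]
        rw [div_lt_iff₀ hε] at hN2
        have : (N2:ℝ) ≤ (M:ℝ) := by exact_mod_cast le_max_right N1 N2
        nlinarith
      exact le_trans (sub_le_sub_left h2 (F y)) h1.le
    · have := hN1 M (le_max_left _ _)
      rw [dist_eq_norm] at this
      exact this.le
  choose pm hpm using hP
  -- quadratic decay from the maximum
  have hQ : ∀ (y lam : E), φ y lam ≤ F y - ρ / 2 * ‖T lam - pm y‖ ^ 2 := by
    intro y lam
    refine le_of_forall_pos_le_add fun δ hδ => ?_
    set r : ℝ := ‖T lam - pm y‖ with hr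
    have hr0 : 0 ≤ r := norm_nonneg _
    set t : ℝ := min (1/2) (δ / (ρ * r ^ 2 + 1)) with ht
    have ht0 : 0 < t := lt_min (by norm_num) (by positivity)
    have ht1 : t ≤ 1/2 := min_le_left _ _
    have ht2 : t * (ρ * r ^ 2 + 1) ≤ δ := by
      have h := min_le_right (1/2:ℝ) (δ / (ρ * r ^ 2 + 1))
      rw [← ht] at h
      rw [← le_div_iff₀ (by positivity)]
      exact h
    set ε : ℝ := (δ / 2) * t / (1 + ρ * r * t) with hε
    have hden : (0:ℝ) < 1 + ρ * r * t := by positivity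
    have hε0 : 0 < ε := by positivity
    have hεeq : ε * (1 + ρ * r * t) = δ / 2 * t := by
      rw [hε]; field_simp
    obtain ⟨lam', h1, h2⟩ := hpm y ε hε0
    have hcb := hconc y lam lam' t ht0.le (by linarith)
    have hle' := hle y (t • lam + (1 - t) • lam')
    set X : ℝ := ‖T lam - T lam'‖ with hX
    have hX0 : 0 ≤ X := norm_nonneg _
    have htri : r - ε ≤ X := by
      have h9 := norm_sub_le_norm_sub_add_norm_sub (T lam) (T lam') (pm y)
      rw [← hr, ← hX] at h9
      linarith
    have hsq : r ^ 2 - 2 * r * ε ≤ X ^ 2 := sq_lower hX0 hr0 htri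
    have h1t : (0:ℝ) ≤ 1 - t := by linarith
    have hcoef : 0 ≤ ρ / 2 * (t * (1 - t)) := by
      have h' : (0:ℝ) ≤ t * (1 - t) := mul_nonneg ht0.le h1t
      positivity
    have hA1 := mul_le_mul_of_nonneg_left h1 h1t
    have hA2 := mul_le_mul_of_nonneg_left hsq hcoef
    have e2' : (0:ℝ) ≤ ρ * (t * t) * (r * ε) := by positivity
    have e3 : ρ / 2 * (t * t) * r ^ 2 ≤ t * (δ / 2) := by
      have h'' := mul_le_mul_of_nonneg_left ht2 ht0.le
      nlinarith [sq_nonneg t]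
    have htε : (0:ℝ) ≤ t * ε := mul_nonneg ht0.le hε0.le
    have hfin : t * φ y lam ≤ t * (F y - ρ / 2 * r ^ 2 + δ) := by
      clear_value φ t ε r X
      nlinarith [hcb, hle', hA1, hA2, e2', e3, hεeq, htε]
    exact le_of_mul_le_mul_left hfin ht0
  -- shift identity
  have hshift : ∀ (y y' lam : E), φ y' lam = φ y lam - ⟪y' - y, T lam⟫ := by
    intro y y' lam
    simp only [hφ, inner_sub_left]
    ring
  -- subgradient lower bound
  have hL : ∀ y y' : E, F y - ⟪pm y, y' - y⟫ ≤ F y' := by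
    intro y y'
    refine le_of_forall_pos_le_add fun δ hδ => ?_
    set d : E := y' - y with hd
    have hden : (0:ℝ) < 1 + ‖d‖ := by positivity
    set ε : ℝ := δ / (1 + ‖d‖) with hε
    have hε0 : 0 < ε := by positivity
    obtain ⟨lam, h1, h2⟩ := hpm y ε hε0
    have h3 : φ y' lam ≤ F y' := hle y' lam
    have h4 : φ y' lam = φ y lam - ⟪d, T lam⟫ := hshift y y' lam
    have h5 : ⟪d, T lam⟫ ≤ ⟪d, pm y⟫ + ‖d‖ * ε := by
      have e : ⟪d, T lam⟫ - ⟪d, pm y⟫ = ⟪d, T lam - pm y⟫ := by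
        rw [inner_sub_right]
      have h6 : ⟪d, T lam - pm y⟫ ≤ ‖d‖ * ‖T lam - pm y‖ := real_inner_le_norm _ _
      have h7 : ‖d‖ * ‖T lam - pm y‖ ≤ ‖d‖ * ε :=
        mul_le_mul_of_nonneg_left h2 (norm_nonneg _)
      linarith
    have h8 : ⟪pm y, d⟫ = ⟪d, pm y⟫ := real_inner_comm _ _
    have h9 : ε * (1 + ‖d‖) = δ := by rw [hε]; field_simp
    nlinarith [h1, h3]
  -- quadratic upper bound
  have hU : ∀ y y' : E, F y' ≤ F y - ⟪pm y, y' - y⟫ + 1 / (2 * ρ) * ‖y' - y‖ ^ 2 := by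
    intro y y'
    rw [hF y']
    refine ciSup_le fun lam => ?_
    show φ y' lam ≤ _
    rw [hshift y y' lam]
    have hq := hQ y lam
    set d : E := y' - y with hd
    set w : E := T lam - pm y with hw
    have h1 : ⟪d, T lam⟫ = ⟪d, pm y⟫ + ⟪d, w⟫ := by
      rw [hw, inner_sub_right]; ring
    have h2 : -⟪d, w⟫ ≤ ‖d‖ * ‖w‖ := by
      have := abs_real_inner_le_norm d w
      cases abs_le.mp this with
      | intro hl hr => linarith
    have h3 : ‖d‖ * ‖w‖ - ρ / 2 * ‖w‖ ^ 2 ≤ 1 / (2 * ρ) * ‖d‖ ^ 2 := by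
      have e : 1 / (2 * ρ) * ‖d‖ ^ 2 = ‖d‖ ^ 2 / (2 * ρ) := by ring
      rw [e, le_div_iff₀ (by positivity)]
      nlinarith [sq_nonneg (ρ * ‖w‖ - ‖d‖)]
    have h8 : ⟪pm y, d⟫ = ⟪d, pm y⟫ := real_inner_comm _ _
    linarith
  -- gradient
  have hgrad : ∀ y : E, HasGradientAt F (-(pm y)) y := by
    intro y
    rw [hasGradientAt_iff_hasFDerivAt, hasFDerivAt_iff_isLittleO_nhds_zero]
    have hbound : ∀ h : E, 0 ≤ F (y + h) - F y - (InnerProductSpace.toDual ℝ E) (-(pm y)) h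
        ∧ (F (y + h) - F y - (InnerProductSpace.toDual ℝ E) (-(pm y)) h) * (2 * ρ)
          ≤ ‖h‖ ^ 2 := by
      intro h
      have e1 : ((InnerProductSpace.toDual ℝ E) (-(pm y))) h = -⟪pm y, h⟫ := by
        rw [InnerProductSpace.toDual_apply_apply, inner_neg_left]
      have e2 : y + h - y = h := by abel
      have h1 := hL y (y + h)
      have h2 := hU y (y + h)
      rw [e2] at h1 h2
      constructor
      · rw [e1]; linarith
      · rw [e1]
        have : 1 / (2 * ρ) * ‖h‖ ^ 2 * (2 * ρ) = ‖h‖ ^ 2 := by field_simp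
        nlinarith
    rw [Asymptotics.isLittleO_iff]
    intro c hc
    have hev : ∀ᶠ h : E in nhds 0, ‖h‖ ≤ 2 * ρ * c := by
      filter_upwards [Metric.closedBall_mem_nhds (0:E) (by positivity : (0:ℝ) < 2*ρ*c)] with h hh
      simpa [Metric.mem_closedBall, dist_zero_right] using hh
    filter_upwards [hev] with h hh
    obtain ⟨hb1, hb2⟩ := hbound h
    rw [Real.norm_eq_abs, abs_of_nonneg hb1]
    nlinarith [norm_nonneg h, hρ]
  have hgradeq : ∀ y : E, gradient F y = -(pm y) := fun y => (hgrad y).gradient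
  -- strong monotonicity
  have hmono : ∀ y y' : E, F y' + ⟪y' - y, pm y'⟫ ≤ F y - ρ / 2 * ‖pm y' - pm y‖ ^ 2 := by
    intro y y'
    refine le_of_forall_pos_le_add fun δ hδ => ?_
    set d : E := y' - y with hd
    set r : ℝ := ‖pm y' - pm y‖ with hr
    have hr0 : 0 ≤ r := norm_nonneg _
    have hden : (0:ℝ) < 1 + ‖d‖ + ρ * r := by positivity
    set ε : ℝ := δ / (1 + ‖d‖ + ρ * r) with hε
    have hε0 : 0 < ε := by positivity
    have hεeq : ε * (1 + ‖d‖ + ρ * r) = δ := by rw [hε]; field_simp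
    obtain ⟨lam, h1, h2⟩ := hpm y' ε hε0
    have hq := hQ y lam
    have hsh : φ y lam = φ y' lam + ⟪d, T lam⟫ := by
      rw [hshift y y' lam]; ring
    have h5 : ⟪d, pm y'⟫ - ‖d‖ * ε ≤ ⟪d, T lam⟫ := by
      have e : ⟪d, T lam⟫ - ⟪d, pm y'⟫ = ⟪d, T lam - pm y'⟫ := by
        rw [inner_sub_right]
      have h6 : -⟪d, T lam - pm y'⟫ ≤ ‖d‖ * ‖T lam - pm y'‖ := by
        have := abs_real_inner_le_norm d (T lam - pm y')
        cases abs_le.mp this with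
        | intro hl hrr => linarith
      have h7 : ‖d‖ * ‖T lam - pm y'‖ ≤ ‖d‖ * ε :=
        mul_le_mul_of_nonneg_left h2 (norm_nonneg _)
      linarith
    set X : ℝ := ‖T lam - pm y‖ with hX
    have hX0 : 0 ≤ X := norm_nonneg _
    have htri : r - ε ≤ X := by
      have := norm_sub_le_norm_sub_add_norm_sub (pm y') (T lam) (pm y)
      have h8 : ‖pm y' - T lam‖ = ‖T lam - pm y'‖ := norm_sub_rev _ _
      rw [h8] at this
      rw [hr, hX]
      linarith [this, h2]
    have hsq : r ^ 2 - 2 * r * ε ≤ X ^ 2 := sq_lower hX0 hr0 htri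
    have hcoef : (0:ℝ) ≤ ρ / 2 := by positivity
    have hA2 := mul_le_mul_of_nonneg_left hsq hcoef
    clear_value φ d r ε X
    nlinarith [hA2, h1, hq, hsh.le, hsh.ge, h5, hεeq]
  refine ⟨hbdd, ?_, fun y => (hgrad y).differentiableAt, ?_⟩
  · -- convexity
    refine ⟨convex_univ, ?_⟩
    intro y1 _ y2 _ a b ha hb hab
    rw [hF]
    refine ciSup_le fun lam => ?_
    have h1 : φ (a • y1 + b • y2) lam = a * φ y1 lam + b * φ y2 lam := by
      simp only [hφ, inner_add_left, real_inner_smul_left]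
      have hb' : b = 1 - a := by linarith
      subst hb'; ring
    have := hle y1 lam
    have := hle y2 lam
    calc (fun lam => -⟪a • y1 + b • y2, T lam⟫ - G lam - ρ / 2 * ‖T lam‖ ^ 2) lam
        = a * φ y1 lam + b * φ y2 lam := h1
      _ ≤ a * F y1 + b * F y2 := by
          have := hle y1 lam; have := hle y2 lam; nlinarith
  · -- Lipschitz gradient
    intro y y'
    rw [hgradeq, hgradeq]
    have hA := hmono y y'
    have hB := hmono y' y
    have hkey : ρ * ‖pm y' - pm y‖ ^ 2 ≤ ⟪y' - y, pm y - pm y'⟫ := by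
      have e1 : ⟪y - y', pm y⟫ = -⟪y' - y, pm y⟫ := by
        rw [← inner_neg_left]; congr 1; abel
      have e2 : ‖pm y - pm y'‖ = ‖pm y' - pm y‖ := norm_sub_rev _ _
      have e3 : ⟪y' - y, pm y - pm y'⟫ = ⟪y' - y, pm y⟫ - ⟪y' - y, pm y'⟫ := by
        rw [inner_sub_right]
      rw [e2] at hB
      rw [e1] at hB
      linarith [hA, hB, e3.ge, e3.le]
    have hcs : ⟪y' - y, pm y - pm y'⟫ ≤ ‖y' - y‖ * ‖pm y - pm y'‖ := by
      have := abs_real_inner_le_norm (y' - y) (pm y - pm y')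
      cases abs_le.mp this; linarith
    have e4 : ‖-(pm y) - -(pm y')‖ = ‖pm y - pm y'‖ := by
      rw [← norm_neg]; congr 1; abel
    rw [e4]
    have e5 : ‖pm y' - pm y‖ = ‖pm y - pm y'‖ := norm_sub_rev _ _
    rw [e5] at hkey
    rcases eq_or_lt_of_le (norm_nonneg (pm y - pm y')) with h0 | h0
    · rw [← h0]; positivity
    · have e6 : ‖y - y'‖ = ‖y' - y‖ := norm_sub_rev _ _
      rw [e6, div_mul_eq_mul_div, le_div_iff₀ hρ]
      nlinarith [le_trans hkey hcs, h0]

end Aux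

/-- Let `G : ℝ^m → ℝ` be convex and bounded below, `S` a symmetric positive semidefinite
`m × m` matrix, and `ρ > 0`.  Then
`F_ρ(y) = sup_λ (−⟪y, S λ⟫ − G(λ) − (ρ/2)‖S λ‖²)` is finite everywhere, convex,
differentiable, and its gradient is `(1/ρ)`-Lipschitz, i.e. `F_ρ` is `(1/ρ)`-smooth. -/
theorem stmt3 {m : ℕ} (ρ : ℝ) (hρ : 0 < ρ)
    (G : EuclideanSpace ℝ (Fin m) → ℝ)
    (hG : ConvexOn ℝ Set.univ G)
    (hGb : BddBelow (Set.range G))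
    (S : Matrix (Fin m) (Fin m) ℝ) (hSsymm : S.IsSymm) (hSpsd : S.PosSemidef)
    (F : EuclideanSpace ℝ (Fin m) → ℝ)
    (hF : ∀ y, F y = ⨆ lam : EuclideanSpace ℝ (Fin m),
      (-⟪y, Matrix.toEuclideanLin S lam⟫ - G lam
        - ρ / 2 * ‖Matrix.toEuclideanLin S lam‖ ^ 2)) :
    -- finite everywhere: the supremand is bounded above at every `y`
    (∀ y : EuclideanSpace ℝ (Fin m), BddAbove (Set.range
        fun lam : EuclideanSpace ℝ (Fin m) =>
          -⟪y, Matrix.toEuclideanLin S lam⟫ - G lam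
            - ρ / 2 * ‖Matrix.toEuclideanLin S lam‖ ^ 2)) ∧
    ConvexOn ℝ Set.univ F ∧
    Differentiable ℝ F ∧
    (∀ y y' : EuclideanSpace ℝ (Fin m),
        ‖gradient F y - gradient F y'‖ ≤ (1 / ρ) * ‖y - y'‖) := by
  exact aux ρ hρ G hG hGb (Matrix.toEuclideanLin S) F hF
end
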